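/- Derivative estimate along the regularized modified dynamics: Let s ∈ (0,1], a > 0, ε ∈ (0,1], let G_{s,ε} be an ε-regularization of G_s and L_{a,ε} an ε-regularization of L_a(q) = q^{−2−a}. Fix i and define Φ(Y) = Σ_{j≠i} L_{a,ε}(|y_{ij}|) and Ψ(Y) = Σ_{j≠i} Σ_{k≠i,j} |a_k| |L_{a,ε}'(|y_{ij}|)| (|G_{s,ε}'(|y_{ik}|)| + |G_{s,ε}'(|y_{ij} − y_{ik}|)|) for Y = (y_{ij})_{j≠i} ∈ ℝ^{2(N−1)}. Then for every solution t ↦ Y(t) = (y_{ij}(t))_{j≠i} of the modified system with kernel G_{s,ε}, one has |d/dt Φ(Y(t))| ≤ Ψ(Y(t)) for all t; in particular, the self-interaction terms involving (a_i + a_j) ∇^⊥G_{s,ε}(|y_{ij}|) give no contribution to d/dt Φ. -/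

import Mathlib

open Filter MeasureTheory Topology
open scoped RealInnerProductSpace

noncomputable section

/-- The plane `ℝ²`. -/
abbrev Plane : Type := EuclideanSpace ℝ (Fin 2)

/-- Counterclockwise rotation by `π/2`: `(v₁, v₂)^⊥ = (−v₂, v₁)`. -/
def perp (v : Plane) : Plane := WithLp.toLp 2 ![-v 1, v 0]

/-- `∇^⊥_y K(|y|) = K'(|y|) y^⊥ / |y|` for a radial kernel profile `K`. -/
def gradPerp (K : ℝ → ℝ) (y : Plane) : Plane := (deriv K ‖y‖ / ‖y‖) • perp y

/-- A solution of the point-vortex system with intensities `a`, kernel profile `G`,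
on the time interval `[0, T)`, with no collapse. -/
def IsVortexSolution (N : ℕ) (a : Fin N → ℝ) (G : ℝ → ℝ) (T : ℝ)
    (x : Fin N → ℝ → Plane) : Prop :=
  (∀ t ∈ Set.Ico (0 : ℝ) T, ∀ i j : Fin N, i ≠ j → x i t ≠ x j t) ∧
  ∀ i : Fin N, ∀ t ∈ Set.Ico (0 : ℝ) T,
    HasDerivWithinAt (x i)
      (∑ j ∈ Finset.univ.erase i, a j • gradPerp G (x i t - x j t))
      (Set.Ico 0 T) t

/-- The Euler kernel `G₁(r) = (1/(2π)) log(1/r)`, profile of the Green function of the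
Laplacian on the plane. -/
def eulerKernel (r : ℝ) : ℝ := (1 / (2 * Real.pi)) * Real.log (1 / r)

/-- The quasi-geostrophic kernels: `G₁(r) = (1/(2π)) log(1/r)` and, for `s ∈ (0,1)`,
`G_s(r) = (Γ(1−s)/(2^{2s} π Γ(s))) r^{−2(1−s)}`. -/
def sqgKernel (s : ℝ) (r : ℝ) : ℝ :=
  if s = 1 then eulerKernel r
  else (Real.Gamma (1 - s) / ((2 : ℝ) ^ (2 * s) * Real.pi * Real.Gamma s)) *
    r ^ (-(2 * (1 - s)))

/-- A solution of the modified (difference) system associated to the index `i`: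
the curves `y_{ij}`, `j ≠ i`, satisfy
`y_{ij}' = (a_i + a_j) ∇^⊥K(|y_{ij}|) + Σ_{k≠i,j} a_k (∇^⊥K(|y_{ik}|) + ∇^⊥K(|y_{ij} − y_{ik}|))`
at every time of the set `I`. -/
def IsModifiedSolutionOn (N : ℕ) (a : Fin N → ℝ) (K : ℝ → ℝ) (i : Fin N)
    (I : Set ℝ) (y : {j : Fin N // j ≠ i} → ℝ → Plane) : Prop :=
  ∀ j : {j : Fin N // j ≠ i}, ∀ t ∈ I,
    HasDerivWithinAt (y j)
      ((a i + a j.val) • gradPerp K (y j t) +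
        ∑ k ∈ Finset.univ.erase j,
          a k.val • (gradPerp K (y k t) + gradPerp K (y j t - y k t)))
      I t

/-- No collapse for the modified system on the time set `I`: all the `y_{ij}` stay away
from `0` and from each other (so that all mutual distances `|x_i − x_j|` stay positive). -/
def ModifiedNoCollapseOn (N : ℕ) (i : Fin N) (I : Set ℝ)
    (y : {j : Fin N // j ≠ i} → ℝ → Plane) : Prop :=
  (∀ j : {j : Fin N // j ≠ i}, ∀ t ∈ I, y j t ≠ 0) ∧
  (∀ j k : {j : Fin N // j ≠ i}, j ≠ k → ∀ t ∈ I, y j t ≠ y k t)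

/-- The modified system collapses (with the vortex `i`) at time `T`:
`liminf_{t→T⁻} min_{j≠i} |y_{ij}(t)| = 0`. -/
def ModifiedCollapsesAt (N : ℕ) (i : Fin N)
    (y : {j : Fin N // j ≠ i} → ℝ → Plane) (T : ℝ) : Prop :=
  ∀ ε > (0 : ℝ), ∀ t₀, 0 ≤ t₀ → t₀ < T →
    ∃ t, t₀ < t ∧ t < T ∧ ∃ j : {j : Fin N // j ≠ i}, ‖y j t‖ < ε

/-- An `ε`-regularization of the kernel profile `K`: a `C¹` function `Kε` on `[0,∞)`
(extended to `ℝ`) that coincides with `K` on `[ε,∞)`, with `|Kε| ≤ |K|` on `(0,∞)`,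
`|Kε'| ≤ |K'(ε)|` on `[0,ε]`, and `|Kε| ≤ 2|K(ε)|` on `[0,∞)`. -/
def IsRegularization (K : ℝ → ℝ) (Kε : ℝ → ℝ) (ε : ℝ) : Prop :=
  ContDiff ℝ 1 Kε ∧
  (∀ q : ℝ, ε ≤ q → Kε q = K q) ∧
  (∀ q : ℝ, 0 < q → |Kε q| ≤ |K q|) ∧
  (∀ q : ℝ, 0 ≤ q → q ≤ ε → |deriv Kε q| ≤ |deriv K ε|) ∧
  (∀ q : ℝ, 0 ≤ q → |Kε q| ≤ 2 * |K ε|)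

lemma perp_zero : perp (0 : Plane) = 0 := by
  ext j; fin_cases j <;> simp [perp]

lemma norm_perp (v : Plane) : ‖perp v‖ = ‖v‖ := by
  simp [perp, EuclideanSpace.norm_eq, Fin.sum_univ_two]
  ring_nf

lemma inner_perp_self (v : Plane) : ⟪v, perp v⟫ = 0 := by
  simp [perp, PiLp.inner_apply, Fin.sum_univ_two]
  ring

lemma inner_gradPerp_self (K : ℝ → ℝ) (z : Plane) : ⟪z, gradPerp K z⟫ = 0 := by
  rw [gradPerp, real_inner_smul_right, inner_perp_self, mul_zero]

lemma norm_gradPerp_le (K : ℝ → ℝ) (z : Plane) : ‖gradPerp K z‖ ≤ |deriv K ‖z‖| := by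
  rcases eq_or_ne z 0 with h | h
  · simp [gradPerp, h, perp_zero]
  · rw [gradPerp, norm_smul, norm_perp, Real.norm_eq_abs, abs_div, abs_norm,
      div_mul_cancel₀ _ (norm_ne_zero_iff.mpr h)]

/-- Key slope estimate. -/
lemma key_slope (L : ℝ → ℝ) (hL : ContDiff ℝ 1 L) {S : Set ℝ} {t : ℝ}
    {Y : ℝ → Plane} {W : Plane} (hY : HasDerivWithinAt Y W S t)
    {C : ℝ} (hC : 0 ≤ C)
    (hinner : |⟪Y t, W⟫| ≤ ‖Y t‖ * C)
    (hnorm : Y t = 0 → ‖W‖ ≤ C)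
    {δ : ℝ} (hδ : 0 < δ) :
    ∀ᶠ τ in 𝓝[S \ {t}] t,
      |L ‖Y τ‖ - L ‖Y t‖| ≤ (|deriv L ‖Y t‖| * C + δ) * |τ - t| := by
  rcases eq_or_ne (Y t) 0 with h0 | h0
  · -- degenerate case
    have hWC := hnorm h0
    have hA : (0:ℝ) ≤ |deriv L 0| := abs_nonneg _
    set A := |deriv L 0| with hAdef
    set δ₁ := δ / (2 * (C + 1)) with hδ₁def
    have hδ₁ : 0 < δ₁ := by positivity
    set δ₂ := min 1 (δ / (2 * (A + 1))) with hδ₂def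
    have hδ₂ : 0 < δ₂ := lt_min one_pos (by positivity)
    -- continuity of deriv L at 0
    have hcont : Continuous (deriv L) := hL.continuous_deriv le_rfl
    obtain ⟨r, hr, hrb'⟩ := Metric.continuousAt_iff.mp (hcont.continuousAt (x := (0:ℝ))) δ₁ hδ₁
    have hrb : ∀ q : ℝ, |q| < r → |deriv L q| ≤ A + δ₁ := by
      intro q hq
      have h2 := hrb' (x := q) (by simpa [Real.dist_eq] using hq)
      rw [Real.dist_eq] at h2
      calc |deriv L q| ≤ |deriv L q - deriv L 0| + |deriv L 0| := by
            simpa using abs_add_le (deriv L q - deriv L 0) (deriv L 0)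
      _ ≤ δ₁ + A := add_le_add h2.le le_rfl
      _ = A + δ₁ := add_comm _ _
    -- MVT
    have hMVT : ∀ b : ℝ, 0 ≤ b → b < r → |L b - L 0| ≤ (A + δ₁) * b := by
      intro b hb hbr
      have hdiff : ∀ x ∈ Set.Icc (0:ℝ) b, HasDerivWithinAt L (deriv L x) (Set.Icc 0 b) x :=
        fun x _ => ((hL.differentiable one_ne_zero) x).hasDerivAt.hasDerivWithinAt
      have hbd : ∀ x ∈ Set.Icc (0:ℝ) b, ‖deriv L x‖ ≤ A + δ₁ := by
        intro x hx
        apply hrb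
        rw [abs_of_nonneg hx.1]
        exact lt_of_le_of_lt hx.2 hbr
      have := (convex_Icc (0:ℝ) b).norm_image_sub_le_of_norm_hasDerivWithin_le hdiff hbd
        (Set.left_mem_Icc.mpr hb) (Set.right_mem_Icc.mpr hb)
      simpa [abs_of_nonneg hb] using this
    -- eventual bounds
    have hYc : ContinuousWithinAt Y S t := hY.continuousWithinAt
    have hsmall : ∀ᶠ τ in 𝓝[S] t, ‖Y τ‖ < r := by
      have h1 : Tendsto (fun τ => ‖Y τ‖) (𝓝[S] t) (𝓝 ‖Y t‖) :=
        (continuous_norm.tendsto _).comp hYc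
      rw [h0, norm_zero] at h1
      exact h1.eventually_lt_const hr
    have hslope := hasDerivWithinAt_iff_tendsto_slope.mp hY
    have hsl2 : ∀ᶠ τ in 𝓝[S \ {t}] t, ‖slope Y t τ‖ < ‖W‖ + δ₂ := by
      have h1 : Tendsto (fun τ => ‖slope Y t τ‖) (𝓝[S \ {t}] t) (𝓝 ‖W‖) :=
        (continuous_norm.tendsto _).comp hslope
      exact h1.eventually_lt_const (lt_add_of_pos_right _ hδ₂)
    filter_upwards [hsl2, hsmall.filter_mono (nhdsWithin_mono t Set.diff_subset), self_mem_nhdsWithin]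
      with τ h1 h2 h3
    have hτ : τ ≠ t := h3.2
    have htt : (0:ℝ) < |τ - t| := by
      rw [abs_pos, sub_ne_zero]; exact hτ
    have hYτ : ‖Y τ‖ ≤ (C + δ₂) * |τ - t| := by
      have hse : ‖Y τ - Y t‖ = ‖slope Y t τ‖ * |τ - t| := by
        rw [slope_def_module, norm_smul, Real.norm_eq_abs, abs_inv, ← abs_sub_comm t τ]
        field_simp
      calc ‖Y τ‖ = ‖Y τ - Y t‖ := by rw [h0, sub_zero]
      _ = ‖slope Y t τ‖ * |τ - t| := hse
      _ ≤ (‖W‖ + δ₂) * |τ - t| := by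
          exact mul_le_mul_of_nonneg_right h1.le (abs_nonneg _)
      _ ≤ (C + δ₂) * |τ - t| := by
          exact mul_le_mul_of_nonneg_right (add_le_add hWC le_rfl) (abs_nonneg _)
    have hd2le : δ₂ ≤ δ / (2 * (A + 1)) := min_le_right _ _
    have hd21 : δ₂ ≤ 1 := min_le_left _ _
    calc |L ‖Y τ‖ - L ‖Y t‖| = |L ‖Y τ‖ - L 0| := by rw [h0, norm_zero]
    _ ≤ (A + δ₁) * ‖Y τ‖ := hMVT _ (norm_nonneg _) h2
    _ ≤ (A + δ₁) * ((C + δ₂) * |τ - t|) := by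
        exact mul_le_mul_of_nonneg_left hYτ (by positivity)
    _ ≤ (A * C + δ) * |τ - t| := by
        rw [← mul_assoc]
        apply mul_le_mul_of_nonneg_right _ (abs_nonneg _)
        have e1 : δ₁ * (C + δ₂) ≤ δ / 2 := by
          calc δ₁ * (C + δ₂) ≤ δ₁ * (C + 1) :=
                mul_le_mul_of_nonneg_left (add_le_add le_rfl hd21) hδ₁.le
          _ = δ / 2 := by rw [hδ₁def]; field_simp
        have e2 : A * δ₂ ≤ δ / 2 := by
          calc A * δ₂ ≤ A * (δ / (2 * (A + 1))) := mul_le_mul_of_nonneg_left hd2le hA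
          _ ≤ δ / 2 := by
              rw [mul_div_assoc', div_le_div_iff₀ (by positivity) (by norm_num)]
              nlinarith
        nlinarith
    _ = (|deriv L ‖Y t‖| * C + δ) * |τ - t| := by rw [h0, norm_zero, ← hAdef]
  · -- nondegenerate case
    have hYne : ‖Y t‖ ≠ 0 := norm_ne_zero_iff.mpr h0
    have hpos : (0:ℝ) < ‖Y t‖ := norm_pos_iff.mpr h0
    have hg : HasDerivWithinAt (fun τ => ⟪Y τ, Y τ⟫) (⟪Y t, W⟫ + ⟪W, Y t⟫) S t :=
      HasDerivWithinAt.inner ℝ hY hY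
    have hself : ⟪Y t, Y t⟫ ≠ 0 := inner_self_ne_zero.mpr h0
    have hsqrt := hg.sqrt hself
    have hfun : (fun τ => Real.sqrt ⟪Y τ, Y τ⟫) = fun τ => ‖Y τ‖ := by
      funext τ
      rw [real_inner_self_eq_norm_sq, Real.sqrt_sq (norm_nonneg _)]
    have hval : Real.sqrt ⟪Y t, Y t⟫ = ‖Y t‖ := by
      rw [real_inner_self_eq_norm_sq, Real.sqrt_sq (norm_nonneg _)]
    rw [hfun, hval] at hsqrt
    have hder : (⟪Y t, W⟫ + ⟪W, Y t⟫) / (2 * ‖Y t‖) = ⟪Y t, W⟫ / ‖Y t‖ := by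
      rw [real_inner_comm W (Y t)]
      field_simp
      ring
    rw [hder] at hsqrt
    have hLd := ((hL.differentiable one_ne_zero) ‖Y t‖).hasDerivAt
    have hf := hLd.comp_hasDerivWithinAt t hsqrt
    set d := deriv L ‖Y t‖ * (⟪Y t, W⟫ / ‖Y t‖) with hddef
    have hfd : HasDerivWithinAt (fun τ => L ‖Y τ‖) d S t := hf
    have hdb : |d| ≤ |deriv L ‖Y t‖| * C := by
      rw [hddef, abs_mul, abs_div, abs_norm]
      apply mul_le_mul_of_nonneg_left _ (abs_nonneg _)
      rw [div_le_iff₀ hpos]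
      calc |⟪Y t, W⟫| ≤ ‖Y t‖ * C := hinner
      _ = C * ‖Y t‖ := mul_comm _ _
    have hslope := hasDerivWithinAt_iff_tendsto_slope.mp hfd
    have hsl2 : ∀ᶠ τ in 𝓝[S \ {t}] t, |slope (fun τ => L ‖Y τ‖) t τ| < |d| + δ := by
      have h1 : Tendsto (fun τ => |slope (fun τ => L ‖Y τ‖) t τ|) (𝓝[S \ {t}] t) (𝓝 |d|) :=
        (continuous_abs.tendsto _).comp hslope
      exact h1.eventually_lt_const (lt_add_of_pos_right _ hδ)
    filter_upwards [hsl2, self_mem_nhdsWithin] with τ h1 h3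
    have hτ : τ ≠ t := h3.2
    have htt : (0:ℝ) < |τ - t| := by rw [abs_pos, sub_ne_zero]; exact hτ
    have hse : |L ‖Y τ‖ - L ‖Y t‖| = |slope (fun τ => L ‖Y τ‖) t τ| * |τ - t| := by
      rw [slope_def_field, abs_div]
      field_simp
    rw [hse]
    calc |slope (fun τ => L ‖Y τ‖) t τ| * |τ - t| ≤ (|d| + δ) * |τ - t| :=
        mul_le_mul_of_nonneg_right h1.le (abs_nonneg _)
    _ ≤ (|deriv L ‖Y t‖| * C + δ) * |τ - t| :=
        mul_le_mul_of_nonneg_right (add_le_add hdb le_rfl) (abs_nonneg _)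
lemma gradPerp_zero (K : ℝ → ℝ) : gradPerp K 0 = 0 := by
  rw [gradPerp, perp_zero, smul_zero]

set_option maxHeartbeats 1000000 in
theorem derivative_estimate_along_regularized_dynamics'
    (N : ℕ) (a : Fin N → ℝ) (i : Fin N)
    (Gε : ℝ → ℝ)
    (Lε : ℝ → ℝ) (hLε1 : ContDiff ℝ 1 Lε)
    (T : ℝ) (y : {j : Fin N // j ≠ i} → ℝ → Plane)
    (hy : ∀ j : {j : Fin N // j ≠ i}, ∀ t ∈ Set.Ico (0:ℝ) T,
      HasDerivWithinAt (y j)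
        ((a i + a j.val) • gradPerp Gε (y j t) +
          ∑ k ∈ Finset.univ.erase j,
            a k.val • (gradPerp Gε (y k t) + gradPerp Gε (y j t - y k t)))
        (Set.Ico 0 T) t) :
    ∀ t ∈ Set.Ico (0 : ℝ) T, ∀ v : ℝ,
      HasDerivWithinAt (fun τ => ∑ j : {j : Fin N // j ≠ i}, Lε ‖y j τ‖)
        v (Set.Ico 0 T) t →
      |v| ≤ ∑ j : {j : Fin N // j ≠ i}, ∑ k ∈ Finset.univ.erase j,
        |a k.val| * |deriv Lε ‖y j t‖| *
          (|deriv Gε ‖y k t‖| + |deriv Gε ‖y j t - y k t‖|) := by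
  intro t ht v hv
  set S := Set.Ico (0:ℝ) T with hS
  have hne : (𝓝[S \ {t}] t).NeBot := by
    have hsub : Set.Ioo t T ⊆ S \ {t} := by
      intro x hx
      exact ⟨⟨le_trans ht.1 hx.1.le, hx.2⟩, fun hxx => lt_irrefl t (by
        rw [Set.mem_singleton_iff] at hxx
        exact hxx ▸ hx.1)⟩
    have h1 : (𝓝[Set.Ioo t T] t).NeBot := by
      rw [← mem_closure_iff_nhdsWithin_neBot, closure_Ioo ht.2.ne]
      exact ⟨le_rfl, ht.2.le⟩
    exact h1.mono (nhdsWithin_mono t hsub)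
  set E : {j : Fin N // j ≠ i} → {j : Fin N // j ≠ i} → ℝ :=
    fun j k => |deriv Gε ‖y k t‖| + |deriv Gε ‖y j t - y k t‖| with hE
  set C : {j : Fin N // j ≠ i} → ℝ :=
    fun j => ∑ k ∈ Finset.univ.erase j, |a k.val| * E j k with hCdef
  have hEpos : ∀ j k, 0 ≤ E j k := fun j k => add_nonneg (abs_nonneg _) (abs_nonneg _)
  have hCpos : ∀ j, 0 ≤ C j := fun j =>
    Finset.sum_nonneg fun k _ => mul_nonneg (abs_nonneg _) (hEpos j k)
  set W : {j : Fin N // j ≠ i} → Plane :=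
    fun j => (a i + a j.val) • gradPerp Gε (y j t) +
      ∑ k ∈ Finset.univ.erase j,
        a k.val • (gradPerp Gε (y k t) + gradPerp Gε (y j t - y k t)) with hWdef
  have hW : ∀ j, HasDerivWithinAt (y j) (W j) S t := fun j => hy j t ht
  have hgnorm : ∀ (j k : {j : Fin N // j ≠ i}),
      ‖gradPerp Gε (y k t) + gradPerp Gε (y j t - y k t)‖ ≤ E j k := fun j k =>
    le_trans (norm_add_le _ _) (add_le_add (norm_gradPerp_le _ _) (norm_gradPerp_le _ _))
  have hinner : ∀ j, |⟪y j t, W j⟫| ≤ ‖y j t‖ * C j := by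
    intro j
    have h1 : ⟪y j t, W j⟫ = ∑ k ∈ Finset.univ.erase j,
        ⟪y j t, a k.val • (gradPerp Gε (y k t) + gradPerp Gε (y j t - y k t))⟫ := by
      rw [hWdef]
      rw [inner_add_right, real_inner_smul_right, inner_gradPerp_self, mul_zero, zero_add,
        inner_sum]
    rw [h1]
    calc |∑ k ∈ Finset.univ.erase j, ⟪y j t,
          a k.val • (gradPerp Gε (y k t) + gradPerp Gε (y j t - y k t))⟫|
        ≤ ∑ k ∈ Finset.univ.erase j, |⟪y j t,
          a k.val • (gradPerp Gε (y k t) + gradPerp Gε (y j t - y k t))⟫| :=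
        Finset.abs_sum_le_sum_abs _ _
    _ ≤ ∑ k ∈ Finset.univ.erase j, ‖y j t‖ * (|a k.val| * E j k) := by
        apply Finset.sum_le_sum
        intro k _
        rw [real_inner_smul_right, abs_mul]
        calc |a k.val| * |⟪y j t, gradPerp Gε (y k t) + gradPerp Gε (y j t - y k t)⟫|
            ≤ |a k.val| * (‖y j t‖ * ‖gradPerp Gε (y k t) + gradPerp Gε (y j t - y k t)‖) :=
            mul_le_mul_of_nonneg_left (abs_real_inner_le_norm _ _) (abs_nonneg _)
        _ ≤ |a k.val| * (‖y j t‖ * E j k) :=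
            mul_le_mul_of_nonneg_left
              (mul_le_mul_of_nonneg_left (hgnorm j k) (norm_nonneg _)) (abs_nonneg _)
        _ = ‖y j t‖ * (|a k.val| * E j k) := by ring
    _ = ‖y j t‖ * C j := by rw [hCdef, Finset.mul_sum]
  have hnorm0 : ∀ j, y j t = 0 → ‖W j‖ ≤ C j := by
    intro j h0
    have hself : (a i + a j.val) • gradPerp Gε (y j t) = 0 := by
      rw [h0, gradPerp_zero, smul_zero]
    rw [hWdef]
    beta_reduce
    rw [hself, zero_add]
    calc ‖∑ k ∈ Finset.univ.erase j,
          a k.val • (gradPerp Gε (y k t) + gradPerp Gε (y j t - y k t))‖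
        ≤ ∑ k ∈ Finset.univ.erase j,
          ‖a k.val • (gradPerp Gε (y k t) + gradPerp Gε (y j t - y k t))‖ :=
        norm_sum_le _ _
    _ ≤ ∑ k ∈ Finset.univ.erase j, |a k.val| * E j k := by
        apply Finset.sum_le_sum
        intro k _
        rw [norm_smul, Real.norm_eq_abs]
        exact mul_le_mul_of_nonneg_left (hgnorm j k) (abs_nonneg _)
    _ = C j := rfl
  have hΨ : (∑ j : {j : Fin N // j ≠ i}, ∑ k ∈ Finset.univ.erase j,
        |a k.val| * |deriv Lε ‖y j t‖| * E j k) =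
      ∑ j : {j : Fin N // j ≠ i}, |deriv Lε ‖y j t‖| * C j := by
    apply Finset.sum_congr rfl
    intro j _
    rw [hCdef, Finset.mul_sum]
    apply Finset.sum_congr rfl
    intro k _
    ring
  rw [show (∑ j : {j : Fin N // j ≠ i}, ∑ k ∈ Finset.univ.erase j,
      |a k.val| * |deriv Lε ‖y j t‖| *
        (|deriv Gε ‖y k t‖| + |deriv Gε ‖y j t - y k t‖|)) =
      ∑ j : {j : Fin N // j ≠ i}, |deriv Lε ‖y j t‖| * C j from hΨ]
  refine le_of_forall_pos_le_add ?_
  intro δ hδ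
  set m : ℝ := (Fintype.card {j : Fin N // j ≠ i} : ℝ) with hm
  have hm0 : 0 ≤ m := Nat.cast_nonneg _
  set δ' : ℝ := δ / (m + 1) with hδ'def
  have hδ' : 0 < δ' := by positivity
  have hmδ' : m * δ' ≤ δ := by
    rw [hδ'def, mul_div_assoc']
    rw [div_le_iff₀ (by positivity)]
    nlinarith
  have hkey : ∀ j : {j : Fin N // j ≠ i}, ∀ᶠ τ in 𝓝[S \ {t}] t,
      |Lε ‖y j τ‖ - Lε ‖y j t‖| ≤ (|deriv Lε ‖y j t‖| * C j + δ') * |τ - t| :=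
    fun j => key_slope Lε hLε1 (hW j) (hCpos j) (hinner j) (hnorm0 j) hδ'
  have hall : ∀ᶠ τ in 𝓝[S \ {t}] t, ∀ j : {j : Fin N // j ≠ i},
      |Lε ‖y j τ‖ - Lε ‖y j t‖| ≤ (|deriv Lε ‖y j t‖| * C j + δ') * |τ - t| :=
    Filter.eventually_all.mpr hkey
  have hslope := hasDerivWithinAt_iff_tendsto_slope.mp hv
  have habs : Tendsto (fun τ => |slope (fun τ => ∑ j : {j : Fin N // j ≠ i}, Lε ‖y j τ‖) t τ|)
      (𝓝[S \ {t}] t) (𝓝 |v|) := (continuous_abs.tendsto _).comp hslope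
  refine le_of_tendsto habs ?_
  filter_upwards [hall, self_mem_nhdsWithin] with τ hj hτS
  have hτ : τ ≠ t := hτS.2
  have htt : (0:ℝ) < |τ - t| := by rw [abs_pos, sub_ne_zero]; exact hτ
  rw [slope_def_field, abs_div, div_le_iff₀ htt]
  calc |(∑ j : {j : Fin N // j ≠ i}, Lε ‖y j τ‖) - ∑ j : {j : Fin N // j ≠ i}, Lε ‖y j t‖|
      = |∑ j : {j : Fin N // j ≠ i}, (Lε ‖y j τ‖ - Lε ‖y j t‖)| := by
        rw [Finset.sum_sub_distrib]
  _ ≤ ∑ j : {j : Fin N // j ≠ i}, |Lε ‖y j τ‖ - Lε ‖y j t‖| :=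
      Finset.abs_sum_le_sum_abs _ _
  _ ≤ ∑ j : {j : Fin N // j ≠ i}, (|deriv Lε ‖y j t‖| * C j + δ') * |τ - t| :=
      Finset.sum_le_sum fun j _ => hj j
  _ = ((∑ j : {j : Fin N // j ≠ i}, |deriv Lε ‖y j t‖| * C j) + m * δ') * |τ - t| := by
      rw [← Finset.sum_mul, Finset.sum_add_distrib, Finset.sum_const, Finset.card_univ,
        nsmul_eq_mul, hm]
  _ ≤ ((∑ j : {j : Fin N // j ≠ i}, |deriv Lε ‖y j t‖| * C j) + δ) * |τ - t| :=
      mul_le_mul_of_nonneg_right (add_le_add le_rfl hmδ') (abs_nonneg _)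

/-- Derivative estimate along the regularized modified dynamics: with
`Φ(Y) = Σ_{j≠i} L_{a,ε}(|y_{ij}|)` and
`Ψ(Y) = Σ_{j≠i} Σ_{k≠i,j} |a_k| |L_{a,ε}'(|y_{ij}|)| (|G_{s,ε}'(|y_{ik}|)| + |G_{s,ε}'(|y_{ij} − y_{ik}|)|)`,
any derivative of `t ↦ Φ(Y(t))` along a solution of the modified system with kernel
`G_{s,ε}` is bounded in absolute value by `Ψ(Y(t))` (the self-interaction terms give no
contribution). -/
theorem derivative_estimate_along_regularized_dynamics
    (s α : ℝ) (hs : 0 < s) (hs1 : s ≤ 1) (hα : 0 < α)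
    (N : ℕ) (hN : 1 ≤ N) (a : Fin N → ℝ) (ha : ∀ i, a i ≠ 0) (i : Fin N)
    (ε : ℝ) (hε : 0 < ε) (hε1 : ε ≤ 1)
    (Gε : ℝ → ℝ) (hGε : IsRegularization (sqgKernel s) Gε ε)
    (Lε : ℝ → ℝ) (hLε : IsRegularization (fun q : ℝ => q ^ (-(2 + α))) Lε ε)
    (T : ℝ) (y : {j : Fin N // j ≠ i} → ℝ → Plane)
    (hy : IsModifiedSolutionOn N a Gε i (Set.Ico 0 T) y) :
    ∀ t ∈ Set.Ico (0 : ℝ) T, ∀ v : ℝ,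
      HasDerivWithinAt (fun τ => ∑ j : {j : Fin N // j ≠ i}, Lε ‖y j τ‖)
        v (Set.Ico 0 T) t →
      |v| ≤ ∑ j : {j : Fin N // j ≠ i}, ∑ k ∈ Finset.univ.erase j,
        |a k.val| * |deriv Lε ‖y j t‖| *
          (|deriv Gε ‖y k t‖| + |deriv Gε ‖y j t - y k t‖|) := by
  exact derivative_estimate_along_regularized_dynamics' N a i Gε Lε hLε.1 T y hy
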